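/- Let 𝔤₂ = (xy², xyz, yz², x⁴ − y³z, xz³ − y⁴, x³y − z⁴) ⊆ Q. Then the quotient ring R = Q/𝔤₂ is a finite-dimensional k-vector space of dimension 24; more precisely, the images of the 24 monomials 1; x, y, z; x², xy, xz, y², yz, z²; x³, x²y, x²z, xz², y³, y²z, z³; x⁴, x³y, x³z, x²z², xz³; x⁴y, x³z² form a k-basis of R. -/

import Mathlib

/-!
STATEMENT 16: The quotient ring `R = Q/g2` is a finite-dimensional `k`-vector
space of dimension 24; the images of the 24 listed monomials form a `k`-basis of
`R`, i.e. they are linearly independent over `k` and span `R`.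

Here `Q = k[[x,y,z]]` is formalized as `MvPowerSeries (Fin 3) k` with
`x = X 0`, `y = X 1`, `z = X 2`.
-/

noncomputable section

/-- The variable `x` in `Q = k[[x,y,z]]`. -/
def xx (k : Type*) [Field k] : MvPowerSeries (Fin 3) k := MvPowerSeries.X 0
/-- The variable `y` in `Q = k[[x,y,z]]`. -/
def yy (k : Type*) [Field k] : MvPowerSeries (Fin 3) k := MvPowerSeries.X 1
/-- The variable `z` in `Q = k[[x,y,z]]`. -/
def zz (k : Type*) [Field k] : MvPowerSeries (Fin 3) k := MvPowerSeries.X 2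

/-- The ideal `g2` of the paper. -/
def Ig2 (k : Type*) [Field k] : Ideal (MvPowerSeries (Fin 3) k) :=
  Ideal.span {xx k * yy k ^ 2, xx k * yy k * zz k, yy k * zz k ^ 2, xx k ^ 4 - yy k ^ 3 * zz k, xx k * zz k ^ 3 - yy k ^ 4, xx k ^ 3 * yy k - zz k ^ 4}

/-- The family of images in `R = Q/g2` of the 24 listed monomials. -/
def mons_g2 (k : Type*) [Field k] : Fin 24 → (MvPowerSeries (Fin 3) k ⧸ Ig2 k) :=
  ![Ideal.Quotient.mk (Ig2 k) (1),
    Ideal.Quotient.mk (Ig2 k) (xx k),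
    Ideal.Quotient.mk (Ig2 k) (yy k),
    Ideal.Quotient.mk (Ig2 k) (zz k),
    Ideal.Quotient.mk (Ig2 k) (xx k ^ 2),
    Ideal.Quotient.mk (Ig2 k) (xx k * yy k),
    Ideal.Quotient.mk (Ig2 k) (xx k * zz k),
    Ideal.Quotient.mk (Ig2 k) (yy k ^ 2),
    Ideal.Quotient.mk (Ig2 k) (yy k * zz k),
    Ideal.Quotient.mk (Ig2 k) (zz k ^ 2),
    Ideal.Quotient.mk (Ig2 k) (xx k ^ 3),
    Ideal.Quotient.mk (Ig2 k) (xx k ^ 2 * yy k),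
    Ideal.Quotient.mk (Ig2 k) (xx k ^ 2 * zz k),
    Ideal.Quotient.mk (Ig2 k) (xx k * zz k ^ 2),
    Ideal.Quotient.mk (Ig2 k) (yy k ^ 3),
    Ideal.Quotient.mk (Ig2 k) (yy k ^ 2 * zz k),
    Ideal.Quotient.mk (Ig2 k) (zz k ^ 3),
    Ideal.Quotient.mk (Ig2 k) (xx k ^ 4),
    Ideal.Quotient.mk (Ig2 k) (xx k ^ 3 * yy k),
    Ideal.Quotient.mk (Ig2 k) (xx k ^ 3 * zz k),
    Ideal.Quotient.mk (Ig2 k) (xx k ^ 2 * zz k ^ 2),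
    Ideal.Quotient.mk (Ig2 k) (xx k * zz k ^ 3),
    Ideal.Quotient.mk (Ig2 k) (xx k ^ 4 * yy k),
    Ideal.Quotient.mk (Ig2 k) (xx k ^ 3 * zz k ^ 2)]

noncomputable section
namespace BG2
set_option maxRecDepth 100000
open MvPowerSeries Finset

def ee (t : ℕ × ℕ × ℕ) : Fin 3 →₀ ℕ :=
  Finsupp.single 0 t.1 + Finsupp.single 1 t.2.1 + Finsupp.single 2 t.2.2

lemma ee_apply0 (t : ℕ × ℕ × ℕ) : ee t 0 = t.1 := by simp [ee, Finsupp.single_apply]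
lemma ee_apply1 (t : ℕ × ℕ × ℕ) : ee t 1 = t.2.1 := by simp [ee, Finsupp.single_apply]
lemma ee_apply2 (t : ℕ × ℕ × ℕ) : ee t 2 = t.2.2 := by simp [ee, Finsupp.single_apply]

def tle (s t : ℕ × ℕ × ℕ) : Prop := s.1 ≤ t.1 ∧ s.2.1 ≤ t.2.1 ∧ s.2.2 ≤ t.2.2
instance (s t : ℕ × ℕ × ℕ) : Decidable (tle s t) := instDecidableAnd

def tadd (s t : ℕ × ℕ × ℕ) : ℕ × ℕ × ℕ := (s.1+t.1, s.2.1+t.2.1, s.2.2+t.2.2)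
def tsub (s t : ℕ × ℕ × ℕ) : ℕ × ℕ × ℕ := (s.1-t.1, s.2.1-t.2.1, s.2.2-t.2.2)
def tr3 (ν : Fin 3 →₀ ℕ) : ℕ × ℕ × ℕ := (ν 0, ν 1, ν 2)
def deg3 (t : ℕ × ℕ × ℕ) : ℕ := t.1 + t.2.1 + t.2.2

lemma ee_tr3 (ν : Fin 3 →₀ ℕ) : ee (tr3 ν) = ν := by
  ext i; fin_cases i
  · exact ee_apply0 _
  · exact ee_apply1 _
  · exact ee_apply2 _

lemma ee_eq_iff {s t : ℕ × ℕ × ℕ} : ee s = ee t ↔ s = t := by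
  constructor
  · intro h
    have h0 := DFunLike.congr_fun h 0
    have h1 := DFunLike.congr_fun h 1
    have h2 := DFunLike.congr_fun h 2
    simp only [ee_apply0, ee_apply1, ee_apply2] at h0 h1 h2
    exact Prod.ext h0 (Prod.ext h1 h2)
  · rintro rfl; rfl

lemma ee_le_iff {s t : ℕ × ℕ × ℕ} : ee s ≤ ee t ↔ tle s t := by
  rw [Finsupp.le_def]
  constructor
  · intro h; exact ⟨by simpa [ee_apply0] using h 0, by simpa [ee_apply1] using h 1,
      by simpa [ee_apply2] using h 2⟩
  · intro h i; fin_cases i <;>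
      simp [ee_apply0, ee_apply1, ee_apply2, h.1, h.2.1, h.2.2]

lemma ee_sub {s t : ℕ × ℕ × ℕ} : ee t - ee s = ee (tsub t s) := by
  ext i; rw [Finsupp.tsub_apply]; fin_cases i <;>
    simp [ee_apply0, ee_apply1, ee_apply2, tsub]

lemma tsub_tadd_cancel {s t : ℕ × ℕ × ℕ} (h : tle s t) : tadd (tsub t s) s = t := by
  obtain ⟨a, b, c⟩ := t; obtain ⟨d, e, f⟩ := s
  simp only [tle] at h
  obtain ⟨h1, h2, h3⟩ := h
  simp only [tadd, tsub, Prod.mk.injEq]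
  refine ⟨by omega, by omega, by omega⟩

lemma tadd_tsub_cancel {s u : ℕ × ℕ × ℕ} : tsub (tadd u s) s = u := by
  obtain ⟨a, b, c⟩ := u; obtain ⟨d, e, f⟩ := s
  simp only [tadd, tsub, Prod.mk.injEq]
  refine ⟨by omega, by omega, by omega⟩

lemma tle_tadd (s u : ℕ × ℕ × ℕ) : tle s (tadd u s) := by
  obtain ⟨a, b, c⟩ := u; obtain ⟨d, e, f⟩ := s
  exact ⟨by simp [tadd], by simp [tadd], by simp [tadd]⟩

def Xp (k : Type*) [Field k] (t : ℕ × ℕ × ℕ) : MvPowerSeries (Fin 3) k :=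
  MvPowerSeries.monomial (ee t) 1

lemma xpows (k : Type*) [Field k] (a b c : ℕ) :
    xx k ^ a * yy k ^ b * zz k ^ c = Xp k (a, b, c) := by
  rw [xx, yy, zz, X_pow_eq, X_pow_eq, X_pow_eq, monomial_mul_monomial, monomial_mul_monomial]
  simp only [one_mul, Xp, ee]

/-- index of the normal form of a monomial of degree ≤ 5 (`none` = reduces to 0). -/
def nfIdx : ℕ × ℕ × ℕ → Option (Fin 24)
  | (0,0,0) => some 0
  | (1,0,0) => some 1
  | (0,1,0) => some 2
  | (0,0,1) => some 3
  | (2,0,0) => some 4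
  | (1,1,0) => some 5
  | (1,0,1) => some 6
  | (0,2,0) => some 7
  | (0,1,1) => some 8
  | (0,0,2) => some 9
  | (3,0,0) => some 10
  | (2,1,0) => some 11
  | (2,0,1) => some 12
  | (1,0,2) => some 13
  | (0,3,0) => some 14
  | (0,2,1) => some 15
  | (0,0,3) => some 16
  | (4,0,0) => some 17
  | (3,1,0) => some 18
  | (3,0,1) => some 19
  | (2,0,2) => some 20
  | (1,0,3) => some 21
  | (4,1,0) => some 22
  | (3,0,2) => some 23
  | (0,3,1) => some 17
  | (0,4,0) => some 21
  | (0,0,4) => some 18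
  | (1,0,4) => some 22
  | (0,4,1) => some 22
  | _ => none

def Cz (t : ℕ × ℕ × ℕ) (i : Fin 24) : ℕ := if nfIdx t = some i then 1 else 0

def std : Fin 24 → ℕ × ℕ × ℕ :=
  ![(0,0,0),(1,0,0),(0,1,0),(0,0,1),(2,0,0),(1,1,0),(1,0,1),(0,2,0),(0,1,1),(0,0,2),
    (3,0,0),(2,1,0),(2,0,1),(1,0,2),(0,3,0),(0,2,1),(0,0,3),(4,0,0),(3,1,0),(3,0,1),
    (2,0,2),(1,0,3),(4,1,0),(3,0,2)]

def NFm (k : Type*) [Field k] (t : ℕ × ℕ × ℕ) : MvPowerSeries (Fin 3) k :=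
  match nfIdx t with
  | some j => Xp k (std j)
  | none => 0

def TT : Finset (ℕ × ℕ × ℕ) := Finset.range 6 ×ˢ Finset.range 6 ×ˢ Finset.range 6

lemma mem_TT {t : ℕ × ℕ × ℕ} : t ∈ TT ↔ t.1 < 6 ∧ t.2.1 < 6 ∧ t.2.2 < 6 := by
  simp [TT, Finset.mem_product, Finset.mem_range]

def phi (k : Type*) [Field k] (j : Fin 24) (f : MvPowerSeries (Fin 3) k) : k :=
  ∑ t ∈ TT, (Cz t j : k) * MvPowerSeries.coeff (ee t) f

variable {k : Type*} [Field k]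

lemma phi_sub (j : Fin 24) (f g : MvPowerSeries (Fin 3) k) :
    phi k j (f - g) = phi k j f - phi k j g := by
  simp only [phi, map_sub, mul_sub, Finset.sum_sub_distrib]

lemma phi_add (j : Fin 24) (f g : MvPowerSeries (Fin 3) k) :
    phi k j (f + g) = phi k j f + phi k j g := by
  simp only [phi, map_add, mul_add, Finset.sum_add_distrib]

/-- `phi` of `q * monomial s` vanishes if all standard monomials divisible by `s` reduce to 0. -/
lemma phi_mul_Xp0 (s : ℕ × ℕ × ℕ) (hs : ∀ t ∈ TT, tle s t → nfIdx t = none)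
    (q : MvPowerSeries (Fin 3) k) (j : Fin 24) : phi k j (q * Xp k s) = 0 := by
  refine Finset.sum_eq_zero fun t ht => ?_
  rw [Xp, coeff_mul_monomial]
  by_cases h : tle s t
  · have : Cz t j = 0 := by rw [Cz, hs t ht h]; simp
    rw [this]; simp
  · rw [if_neg (fun hc => h (ee_le_iff.mp hc)), mul_zero]

lemma phi_mul_Xp (s : ℕ × ℕ × ℕ) (hs : ∀ u ∈ TT, tadd u s ∉ TT → nfIdx (tadd u s) = none)
    (q : MvPowerSeries (Fin 3) k) (j : Fin 24) :
    phi k j (q * Xp k s) = ∑ u ∈ TT, (Cz (tadd u s) j : k) * MvPowerSeries.coeff (ee u) q := by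
  unfold phi
  have step1 : ∀ t ∈ TT, (Cz t j : k) * MvPowerSeries.coeff (ee t) (q * Xp k s)
      = if tle s t then (Cz t j : k) * MvPowerSeries.coeff (ee (tsub t s)) q else 0 := by
    intro t _
    rw [Xp, coeff_mul_monomial]
    by_cases h : tle s t
    · rw [if_pos (ee_le_iff.mpr h), if_pos h, ee_sub, mul_one]
    · rw [if_neg (fun hc => h (ee_le_iff.mp hc)), if_neg h, mul_zero]
  have step2 : ∀ u ∈ TT, (Cz (tadd u s) j : k) * MvPowerSeries.coeff (ee u) q
      = if tadd u s ∈ TT then (Cz (tadd u s) j : k) * MvPowerSeries.coeff (ee u) q else 0 := by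
    intro u hu
    by_cases h : tadd u s ∈ TT
    · rw [if_pos h]
    · rw [if_neg h]
      have : Cz (tadd u s) j = 0 := by rw [Cz, hs u hu h]; simp
      rw [this]; simp
  rw [Finset.sum_congr rfl step1, Finset.sum_congr rfl step2, ← Finset.sum_filter,
    ← Finset.sum_filter]
  refine Finset.sum_nbij' (fun t => tsub t s) (fun u => tadd u s) ?_ ?_ ?_ ?_ ?_
  · rintro ⟨a, b, c⟩ ht
    obtain ⟨d, e, f⟩ := s
    rw [Finset.mem_filter] at ht ⊢
    simp only [Finset.mem_filter, mem_TT, tle, tsub, tadd] at ht ⊢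
    omega
  · intro u hu
    rw [Finset.mem_filter] at hu ⊢
    exact ⟨hu.2, tle_tadd s u⟩
  · intro t ht
    exact tsub_tadd_cancel (Finset.mem_filter.mp ht).2
  · intro u _
    exact tadd_tsub_cancel
  · intro t ht
    rw [tsub_tadd_cancel (Finset.mem_filter.mp ht).2]

lemma cubic_aux {s : ℕ × ℕ × ℕ}
    (D : ∀ a b c : Fin 6, tle s ((a:ℕ),(b:ℕ),(c:ℕ)) → nfIdx ((a:ℕ),(b:ℕ),(c:ℕ)) = none) :
    ∀ t ∈ TT, tle s t → nfIdx t = none := by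
  rintro ⟨a, b, c⟩ ht h
  rw [mem_TT] at ht
  exact D ⟨a, ht.1⟩ ⟨b, ht.2.1⟩ ⟨c, ht.2.2⟩ h

lemma shift_aux {s : ℕ × ℕ × ℕ}
    (D : ∀ a b c : Fin 6,
      ((a:ℕ) + s.1 < 6 ∧ (b:ℕ) + s.2.1 < 6 ∧ (c:ℕ) + s.2.2 < 6) ∨
        nfIdx (tadd ((a:ℕ),(b:ℕ),(c:ℕ)) s) = none) :
    ∀ u ∈ TT, tadd u s ∉ TT → nfIdx (tadd u s) = none := by
  rintro ⟨a, b, c⟩ hu h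
  simp only [mem_TT, tadd] at hu h
  rcases D ⟨a, hu.1⟩ ⟨b, hu.2.1⟩ ⟨c, hu.2.2⟩ with hc | hn
  · exact absurd hc h
  · exact hn

/-- `phi` kills the ideal. -/
lemma phi_ideal (j : Fin 24) (f : MvPowerSeries (Fin 3) k) (hf : f ∈ Ig2 k) :
    phi k j f = 0 := by
  have main : ∀ g ∈ Ig2 k, ∀ (q : MvPowerSeries (Fin 3) k) (j : Fin 24), phi k j (q * g) = 0 := by
    intro g hg
    rw [Ig2] at hg
    refine Submodule.span_induction ?_ ?_ ?_ ?_ hg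
    · intro x hx
      simp only [Set.mem_insert_iff, Set.mem_singleton_iff] at hx
      rcases hx with rfl | rfl | rfl | rfl | rfl | rfl
      · intro q j
        rw [show xx k * yy k ^ 2 = Xp k (1,2,0) by rw [← xpows]; ring]
        exact phi_mul_Xp0 _ (cubic_aux (by decide)) q j
      · intro q j
        rw [show xx k * yy k * zz k = Xp k (1,1,1) by rw [← xpows]; ring]
        exact phi_mul_Xp0 _ (cubic_aux (by decide)) q j
      · intro q j
        rw [show yy k * zz k ^ 2 = Xp k (0,1,2) by rw [← xpows]; ring]
        exact phi_mul_Xp0 _ (cubic_aux (by decide)) q j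
      · intro q j
        rw [show xx k ^ 4 - yy k ^ 3 * zz k = Xp k (4,0,0) - Xp k (0,3,1) by
            rw [← xpows, ← xpows]; ring]
        rw [mul_sub, phi_sub, phi_mul_Xp (4,0,0) (shift_aux (by decide)) q j,
          phi_mul_Xp (0,3,1) (shift_aux (by decide)) q j, ← Finset.sum_sub_distrib]
        refine Finset.sum_eq_zero fun u hu => ?_
        rw [mem_TT] at hu
        obtain ⟨a, b, c⟩ := u
        have hEq : nfIdx (tadd (a,b,c) (4,0,0)) = nfIdx (tadd (a,b,c) (0,3,1)) := by
          have D : ∀ a b c : Fin 6,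
              nfIdx (tadd ((a:ℕ),(b:ℕ),(c:ℕ)) (4,0,0))
                = nfIdx (tadd ((a:ℕ),(b:ℕ),(c:ℕ)) (0,3,1)) := by decide
          exact D ⟨a, hu.1⟩ ⟨b, hu.2.1⟩ ⟨c, hu.2.2⟩
        rw [Cz, Cz, hEq, sub_self]
      · intro q j
        rw [show xx k * zz k ^ 3 - yy k ^ 4 = Xp k (1,0,3) - Xp k (0,4,0) by
            rw [← xpows, ← xpows]; ring]
        rw [mul_sub, phi_sub, phi_mul_Xp (1,0,3) (shift_aux (by decide)) q j,
          phi_mul_Xp (0,4,0) (shift_aux (by decide)) q j, ← Finset.sum_sub_distrib]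
        refine Finset.sum_eq_zero fun u hu => ?_
        rw [mem_TT] at hu
        obtain ⟨a, b, c⟩ := u
        have hEq : nfIdx (tadd (a,b,c) (1,0,3)) = nfIdx (tadd (a,b,c) (0,4,0)) := by
          have D : ∀ a b c : Fin 6,
              nfIdx (tadd ((a:ℕ),(b:ℕ),(c:ℕ)) (1,0,3))
                = nfIdx (tadd ((a:ℕ),(b:ℕ),(c:ℕ)) (0,4,0)) := by decide
          exact D ⟨a, hu.1⟩ ⟨b, hu.2.1⟩ ⟨c, hu.2.2⟩
        rw [Cz, Cz, hEq, sub_self]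
      · intro q j
        rw [show xx k ^ 3 * yy k - zz k ^ 4 = Xp k (3,1,0) - Xp k (0,0,4) by
            rw [← xpows, ← xpows]; ring]
        rw [mul_sub, phi_sub, phi_mul_Xp (3,1,0) (shift_aux (by decide)) q j,
          phi_mul_Xp (0,0,4) (shift_aux (by decide)) q j, ← Finset.sum_sub_distrib]
        refine Finset.sum_eq_zero fun u hu => ?_
        rw [mem_TT] at hu
        obtain ⟨a, b, c⟩ := u
        have hEq : nfIdx (tadd (a,b,c) (3,1,0)) = nfIdx (tadd (a,b,c) (0,0,4)) := by
          have D : ∀ a b c : Fin 6,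
              nfIdx (tadd ((a:ℕ),(b:ℕ),(c:ℕ)) (3,1,0))
                = nfIdx (tadd ((a:ℕ),(b:ℕ),(c:ℕ)) (0,0,4)) := by decide
          exact D ⟨a, hu.1⟩ ⟨b, hu.2.1⟩ ⟨c, hu.2.2⟩
        rw [Cz, Cz, hEq, sub_self]
    · intro q j
      rw [mul_zero]
      simp [phi]
    · intro x y _ _ hx hy q j
      rw [mul_add, phi_add, hx q j, hy q j, add_zero]
    · intro r x _ hx q j
      rw [smul_eq_mul, show q * (r * x) = (q * r) * x by ring]
      exact hx (q * r) j
  simpa using main f hf 1 j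

lemma stdTT : ∀ i : Fin 24, std i ∈ TT := by decide

lemma nfIdx_std : ∀ i : Fin 24, nfIdx (std i) = some i := by decide

lemma mons_eq (k : Type*) [Field k] (i : Fin 24) :
    mons_g2 k i = Ideal.Quotient.mk (Ig2 k) (Xp k (std i)) := by
  fin_cases i
  · show Ideal.Quotient.mk (Ig2 k) (1) = Ideal.Quotient.mk (Ig2 k) (Xp k (0,0,0))
    exact congrArg _ (by rw [← xpows]; ring)
  · show Ideal.Quotient.mk (Ig2 k) (xx k) = Ideal.Quotient.mk (Ig2 k) (Xp k (1,0,0))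
    exact congrArg _ (by rw [← xpows]; ring)
  · show Ideal.Quotient.mk (Ig2 k) (yy k) = Ideal.Quotient.mk (Ig2 k) (Xp k (0,1,0))
    exact congrArg _ (by rw [← xpows]; ring)
  · show Ideal.Quotient.mk (Ig2 k) (zz k) = Ideal.Quotient.mk (Ig2 k) (Xp k (0,0,1))
    exact congrArg _ (by rw [← xpows]; ring)
  · show Ideal.Quotient.mk (Ig2 k) (xx k ^ 2) = Ideal.Quotient.mk (Ig2 k) (Xp k (2,0,0))
    exact congrArg _ (by rw [← xpows]; ring)
  · show Ideal.Quotient.mk (Ig2 k) (xx k * yy k) = Ideal.Quotient.mk (Ig2 k) (Xp k (1,1,0))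
    exact congrArg _ (by rw [← xpows]; ring)
  · show Ideal.Quotient.mk (Ig2 k) (xx k * zz k) = Ideal.Quotient.mk (Ig2 k) (Xp k (1,0,1))
    exact congrArg _ (by rw [← xpows]; ring)
  · show Ideal.Quotient.mk (Ig2 k) (yy k ^ 2) = Ideal.Quotient.mk (Ig2 k) (Xp k (0,2,0))
    exact congrArg _ (by rw [← xpows]; ring)
  · show Ideal.Quotient.mk (Ig2 k) (yy k * zz k) = Ideal.Quotient.mk (Ig2 k) (Xp k (0,1,1))
    exact congrArg _ (by rw [← xpows]; ring)
  · show Ideal.Quotient.mk (Ig2 k) (zz k ^ 2) = Ideal.Quotient.mk (Ig2 k) (Xp k (0,0,2))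
    exact congrArg _ (by rw [← xpows]; ring)
  · show Ideal.Quotient.mk (Ig2 k) (xx k ^ 3) = Ideal.Quotient.mk (Ig2 k) (Xp k (3,0,0))
    exact congrArg _ (by rw [← xpows]; ring)
  · show Ideal.Quotient.mk (Ig2 k) (xx k ^ 2 * yy k) = Ideal.Quotient.mk (Ig2 k) (Xp k (2,1,0))
    exact congrArg _ (by rw [← xpows]; ring)
  · show Ideal.Quotient.mk (Ig2 k) (xx k ^ 2 * zz k) = Ideal.Quotient.mk (Ig2 k) (Xp k (2,0,1))
    exact congrArg _ (by rw [← xpows]; ring)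
  · show Ideal.Quotient.mk (Ig2 k) (xx k * zz k ^ 2) = Ideal.Quotient.mk (Ig2 k) (Xp k (1,0,2))
    exact congrArg _ (by rw [← xpows]; ring)
  · show Ideal.Quotient.mk (Ig2 k) (yy k ^ 3) = Ideal.Quotient.mk (Ig2 k) (Xp k (0,3,0))
    exact congrArg _ (by rw [← xpows]; ring)
  · show Ideal.Quotient.mk (Ig2 k) (yy k ^ 2 * zz k) = Ideal.Quotient.mk (Ig2 k) (Xp k (0,2,1))
    exact congrArg _ (by rw [← xpows]; ring)
  · show Ideal.Quotient.mk (Ig2 k) (zz k ^ 3) = Ideal.Quotient.mk (Ig2 k) (Xp k (0,0,3))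
    exact congrArg _ (by rw [← xpows]; ring)
  · show Ideal.Quotient.mk (Ig2 k) (xx k ^ 4) = Ideal.Quotient.mk (Ig2 k) (Xp k (4,0,0))
    exact congrArg _ (by rw [← xpows]; ring)
  · show Ideal.Quotient.mk (Ig2 k) (xx k ^ 3 * yy k) = Ideal.Quotient.mk (Ig2 k) (Xp k (3,1,0))
    exact congrArg _ (by rw [← xpows]; ring)
  · show Ideal.Quotient.mk (Ig2 k) (xx k ^ 3 * zz k) = Ideal.Quotient.mk (Ig2 k) (Xp k (3,0,1))
    exact congrArg _ (by rw [← xpows]; ring)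
  · show Ideal.Quotient.mk (Ig2 k) (xx k ^ 2 * zz k ^ 2) = Ideal.Quotient.mk (Ig2 k) (Xp k (2,0,2))
    exact congrArg _ (by rw [← xpows]; ring)
  · show Ideal.Quotient.mk (Ig2 k) (xx k * zz k ^ 3) = Ideal.Quotient.mk (Ig2 k) (Xp k (1,0,3))
    exact congrArg _ (by rw [← xpows]; ring)
  · show Ideal.Quotient.mk (Ig2 k) (xx k ^ 4 * yy k) = Ideal.Quotient.mk (Ig2 k) (Xp k (4,1,0))
    exact congrArg _ (by rw [← xpows]; ring)
  · show Ideal.Quotient.mk (Ig2 k) (xx k ^ 3 * zz k ^ 2) = Ideal.Quotient.mk (Ig2 k) (Xp k (3,0,2))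
    exact congrArg _ (by rw [← xpows]; ring)

lemma phi_comb (a : Fin 24 → k) (j : Fin 24) :
    phi k j (∑ i, a i • Xp k (std i)) = a j := by
  unfold phi
  have h1 : ∀ t ∈ TT, (Cz t j : k) * MvPowerSeries.coeff (ee t) (∑ i, a i • Xp k (std i))
      = ∑ i, (if t = std i then (Cz t j : k) * a i else 0) := by
    intro t _
    rw [map_sum, Finset.mul_sum]
    refine Finset.sum_congr rfl fun i _ => ?_
    rw [map_smul, Xp, coeff_monomial]
    by_cases h : t = std i
    · rw [if_pos (ee_eq_iff.mpr h), if_pos h, smul_eq_mul, mul_one]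
    · rw [if_neg (fun hc => h (ee_eq_iff.mp hc)), if_neg h, smul_zero, mul_zero]
  rw [Finset.sum_congr rfl h1, Finset.sum_comm]
  have h2 : ∀ i : Fin 24, (∑ t ∈ TT, if t = std i then (Cz t j : k) * a i else 0)
      = (Cz (std i) j : k) * a i := by
    intro i
    rw [Finset.sum_ite_eq' TT (std i) (fun t => (Cz t j : k) * a i), if_pos (stdTT i)]
  rw [Finset.sum_congr rfl (fun i _ => h2 i)]
  have h3 : ∀ i : Fin 24, ((Cz (std i) j : k)) * a i = if i = j then a i else 0 := by
    intro i
    rw [Cz, nfIdx_std i]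
    by_cases h : i = j
    · subst h; simp
    · rw [if_neg (by simpa using h), if_neg h]; simp
  rw [Finset.sum_congr rfl (fun i _ => h3 i), Finset.sum_ite_eq' Finset.univ j a,
    if_pos (Finset.mem_univ j)]

lemma mons_li (k : Type*) [Field k] : LinearIndependent k (mons_g2 k) := by
  rw [Fintype.linearIndependent_iff]
  intro a ha j
  have h0 : Ideal.Quotient.mk (Ig2 k) (∑ i, a i • Xp k (std i)) = 0 := by
    rw [← Ideal.Quotient.mkₐ_eq_mk k, map_sum, ← ha]
    refine Finset.sum_congr rfl fun i _ => ?_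
    rw [map_smul, Ideal.Quotient.mkₐ_eq_mk k, ← mons_eq]
  have hPI : (∑ i, a i • Xp k (std i)) ∈ Ig2 k := Ideal.Quotient.eq_zero_iff_mem.mp h0
  have := phi_ideal j _ hPI
  rwa [phi_comb] at this

lemma memIg2_of_eq {k : Type*} [Field k] (p1 p2 p3 p4 p5 p6 : MvPowerSeries (Fin 3) k)
    (w : MvPowerSeries (Fin 3) k)
    (hw : w = (p1) * (xx k * yy k ^ 2) + (p2) * (xx k * yy k * zz k) + (p3) * (yy k * zz k ^ 2)
      + (p4) * (xx k ^ 4 - yy k ^ 3 * zz k) + (p5) * (xx k * zz k ^ 3 - yy k ^ 4)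
      + (p6) * (xx k ^ 3 * yy k - zz k ^ 4)) :
    w ∈ Ig2 k := by
  rw [hw, Ig2]
  refine add_mem (add_mem (add_mem (add_mem (add_mem ?_ ?_) ?_) ?_) ?_) ?_ <;>
    exact Ideal.mul_mem_left _ _ (Ideal.subset_span (by simp))

lemma red_low (k : Type*) [Field k] :
    ∀ a b c : ℕ, a + b + c ≤ 5 → Xp k (a,b,c) - NFm k (a,b,c) ∈ Ig2 k := by
  intro a b c h
  have ha : a ≤ 5 := by omega
  have hb : b ≤ 5 := by omega
  have hc : c ≤ 5 := by omega
  interval_cases a <;> interval_cases b <;> interval_cases c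
  · exact memIg2_of_eq (0) (0) (0) (0) (0) (0) _
      (by rw [show NFm k (0,0,0) = Xp k (0,0,0) from rfl, ← xpows]; ring)
  · exact memIg2_of_eq (0) (0) (0) (0) (0) (0) _
      (by rw [show NFm k (0,0,1) = Xp k (0,0,1) from rfl, ← xpows]; ring)
  · exact memIg2_of_eq (0) (0) (0) (0) (0) (0) _
      (by rw [show NFm k (0,0,2) = Xp k (0,0,2) from rfl, ← xpows]; ring)
  · exact memIg2_of_eq (0) (0) (0) (0) (0) (0) _
      (by rw [show NFm k (0,0,3) = Xp k (0,0,3) from rfl, ← xpows]; ring)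
  · exact memIg2_of_eq (0) (0) (0) (0) (0) (-1) _
      (by rw [show NFm k (0,0,4) = Xp k (3,1,0) from rfl, ← xpows, ← xpows]; ring)
  · exact memIg2_of_eq (0) (xx k ^ 2) (0) (0) (0) (-(zz k)) _
      (by rw [show NFm k (0,0,5) = 0 from rfl, ← xpows]; ring)
  · exact memIg2_of_eq (0) (0) (0) (0) (0) (0) _
      (by rw [show NFm k (0,1,0) = Xp k (0,1,0) from rfl, ← xpows]; ring)
  · exact memIg2_of_eq (0) (0) (0) (0) (0) (0) _
      (by rw [show NFm k (0,1,1) = Xp k (0,1,1) from rfl, ← xpows]; ring)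
  · exact memIg2_of_eq (0) (0) (1) (0) (0) (0) _
      (by rw [show NFm k (0,1,2) = 0 from rfl, ← xpows]; ring)
  · exact memIg2_of_eq (0) (0) (zz k) (0) (0) (0) _
      (by rw [show NFm k (0,1,3) = 0 from rfl, ← xpows]; ring)
  · exact memIg2_of_eq (0) (0) (zz k ^ 2) (0) (0) (0) _
      (by rw [show NFm k (0,1,4) = 0 from rfl, ← xpows]; ring)
  · exact absurd h (by omega)
  · exact memIg2_of_eq (0) (0) (0) (0) (0) (0) _
      (by rw [show NFm k (0,2,0) = Xp k (0,2,0) from rfl, ← xpows]; ring)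
  · exact memIg2_of_eq (0) (0) (0) (0) (0) (0) _
      (by rw [show NFm k (0,2,1) = Xp k (0,2,1) from rfl, ← xpows]; ring)
  · exact memIg2_of_eq (0) (0) (yy k) (0) (0) (0) _
      (by rw [show NFm k (0,2,2) = 0 from rfl, ← xpows]; ring)
  · exact memIg2_of_eq (0) (0) (yy k * zz k) (0) (0) (0) _
      (by rw [show NFm k (0,2,3) = 0 from rfl, ← xpows]; ring)
  · exact absurd h (by omega)
  · exact absurd h (by omega)
  · exact memIg2_of_eq (0) (0) (0) (0) (0) (0) _
      (by rw [show NFm k (0,3,0) = Xp k (0,3,0) from rfl, ← xpows]; ring)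
  · exact memIg2_of_eq (0) (0) (0) (-1) (0) (0) _
      (by rw [show NFm k (0,3,1) = Xp k (4,0,0) from rfl, ← xpows, ← xpows]; ring)
  · exact memIg2_of_eq (0) (0) (yy k ^ 2) (0) (0) (0) _
      (by rw [show NFm k (0,3,2) = 0 from rfl, ← xpows]; ring)
  · exact absurd h (by omega)
  · exact absurd h (by omega)
  · exact absurd h (by omega)
  · exact memIg2_of_eq (0) (0) (0) (0) (-1) (0) _
      (by rw [show NFm k (0,4,0) = Xp k (1,0,3) from rfl, ← xpows, ← xpows]; ring)
  · exact memIg2_of_eq (0) (0) (0) (0) (-(zz k)) (-(xx k)) _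
      (by rw [show NFm k (0,4,1) = Xp k (4,1,0) from rfl, ← xpows, ← xpows]; ring)
  · exact absurd h (by omega)
  · exact absurd h (by omega)
  · exact absurd h (by omega)
  · exact absurd h (by omega)
  · exact memIg2_of_eq (0) (zz k ^ 2) (0) (0) (-(yy k)) (0) _
      (by rw [show NFm k (0,5,0) = 0 from rfl, ← xpows]; ring)
  · exact absurd h (by omega)
  · exact absurd h (by omega)
  · exact absurd h (by omega)
  · exact absurd h (by omega)
  · exact absurd h (by omega)
  · exact memIg2_of_eq (0) (0) (0) (0) (0) (0) _
      (by rw [show NFm k (1,0,0) = Xp k (1,0,0) from rfl, ← xpows]; ring)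
  · exact memIg2_of_eq (0) (0) (0) (0) (0) (0) _
      (by rw [show NFm k (1,0,1) = Xp k (1,0,1) from rfl, ← xpows]; ring)
  · exact memIg2_of_eq (0) (0) (0) (0) (0) (0) _
      (by rw [show NFm k (1,0,2) = Xp k (1,0,2) from rfl, ← xpows]; ring)
  · exact memIg2_of_eq (0) (0) (0) (0) (0) (0) _
      (by rw [show NFm k (1,0,3) = Xp k (1,0,3) from rfl, ← xpows]; ring)
  · exact memIg2_of_eq (0) (0) (0) (0) (0) (-(xx k)) _
      (by rw [show NFm k (1,0,4) = Xp k (4,1,0) from rfl, ← xpows, ← xpows]; ring)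
  · exact absurd h (by omega)
  · exact memIg2_of_eq (0) (0) (0) (0) (0) (0) _
      (by rw [show NFm k (1,1,0) = Xp k (1,1,0) from rfl, ← xpows]; ring)
  · exact memIg2_of_eq (0) (1) (0) (0) (0) (0) _
      (by rw [show NFm k (1,1,1) = 0 from rfl, ← xpows]; ring)
  · exact memIg2_of_eq (0) (zz k) (0) (0) (0) (0) _
      (by rw [show NFm k (1,1,2) = 0 from rfl, ← xpows]; ring)
  · exact memIg2_of_eq (0) (zz k ^ 2) (0) (0) (0) (0) _
      (by rw [show NFm k (1,1,3) = 0 from rfl, ← xpows]; ring)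
  · exact absurd h (by omega)
  · exact absurd h (by omega)
  · exact memIg2_of_eq (1) (0) (0) (0) (0) (0) _
      (by rw [show NFm k (1,2,0) = 0 from rfl, ← xpows]; ring)
  · exact memIg2_of_eq (zz k) (0) (0) (0) (0) (0) _
      (by rw [show NFm k (1,2,1) = 0 from rfl, ← xpows]; ring)
  · exact memIg2_of_eq (zz k ^ 2) (0) (0) (0) (0) (0) _
      (by rw [show NFm k (1,2,2) = 0 from rfl, ← xpows]; ring)
  · exact absurd h (by omega)
  · exact absurd h (by omega)
  · exact absurd h (by omega)
  · exact memIg2_of_eq (yy k) (0) (0) (0) (0) (0) _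
      (by rw [show NFm k (1,3,0) = 0 from rfl, ← xpows]; ring)
  · exact memIg2_of_eq (yy k * zz k) (0) (0) (0) (0) (0) _
      (by rw [show NFm k (1,3,1) = 0 from rfl, ← xpows]; ring)
  · exact absurd h (by omega)
  · exact absurd h (by omega)
  · exact absurd h (by omega)
  · exact absurd h (by omega)
  · exact memIg2_of_eq (yy k ^ 2) (0) (0) (0) (0) (0) _
      (by rw [show NFm k (1,4,0) = 0 from rfl, ← xpows]; ring)
  · exact absurd h (by omega)
  · exact absurd h (by omega)
  · exact absurd h (by omega)
  · exact absurd h (by omega)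
  · exact absurd h (by omega)
  · exact absurd h (by omega)
  · exact absurd h (by omega)
  · exact absurd h (by omega)
  · exact absurd h (by omega)
  · exact absurd h (by omega)
  · exact absurd h (by omega)
  · exact memIg2_of_eq (0) (0) (0) (0) (0) (0) _
      (by rw [show NFm k (2,0,0) = Xp k (2,0,0) from rfl, ← xpows]; ring)
  · exact memIg2_of_eq (0) (0) (0) (0) (0) (0) _
      (by rw [show NFm k (2,0,1) = Xp k (2,0,1) from rfl, ← xpows]; ring)
  · exact memIg2_of_eq (0) (0) (0) (0) (0) (0) _
      (by rw [show NFm k (2,0,2) = Xp k (2,0,2) from rfl, ← xpows]; ring)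
  · exact memIg2_of_eq (yy k ^ 2) (0) (0) (0) (xx k) (0) _
      (by rw [show NFm k (2,0,3) = 0 from rfl, ← xpows]; ring)
  · exact absurd h (by omega)
  · exact absurd h (by omega)
  · exact memIg2_of_eq (0) (0) (0) (0) (0) (0) _
      (by rw [show NFm k (2,1,0) = Xp k (2,1,0) from rfl, ← xpows]; ring)
  · exact memIg2_of_eq (0) (xx k) (0) (0) (0) (0) _
      (by rw [show NFm k (2,1,1) = 0 from rfl, ← xpows]; ring)
  · exact memIg2_of_eq (0) (xx k * zz k) (0) (0) (0) (0) _
      (by rw [show NFm k (2,1,2) = 0 from rfl, ← xpows]; ring)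
  · exact absurd h (by omega)
  · exact absurd h (by omega)
  · exact absurd h (by omega)
  · exact memIg2_of_eq (xx k) (0) (0) (0) (0) (0) _
      (by rw [show NFm k (2,2,0) = 0 from rfl, ← xpows]; ring)
  · exact memIg2_of_eq (xx k * zz k) (0) (0) (0) (0) (0) _
      (by rw [show NFm k (2,2,1) = 0 from rfl, ← xpows]; ring)
  · exact absurd h (by omega)
  · exact absurd h (by omega)
  · exact absurd h (by omega)
  · exact absurd h (by omega)
  · exact memIg2_of_eq (xx k * yy k) (0) (0) (0) (0) (0) _
      (by rw [show NFm k (2,3,0) = 0 from rfl, ← xpows]; ring)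
  · exact absurd h (by omega)
  · exact absurd h (by omega)
  · exact absurd h (by omega)
  · exact absurd h (by omega)
  · exact absurd h (by omega)
  · exact absurd h (by omega)
  · exact absurd h (by omega)
  · exact absurd h (by omega)
  · exact absurd h (by omega)
  · exact absurd h (by omega)
  · exact absurd h (by omega)
  · exact absurd h (by omega)
  · exact absurd h (by omega)
  · exact absurd h (by omega)
  · exact absurd h (by omega)
  · exact absurd h (by omega)
  · exact absurd h (by omega)
  · exact memIg2_of_eq (0) (0) (0) (0) (0) (0) _
      (by rw [show NFm k (3,0,0) = Xp k (3,0,0) from rfl, ← xpows]; ring)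
  · exact memIg2_of_eq (0) (0) (0) (0) (0) (0) _
      (by rw [show NFm k (3,0,1) = Xp k (3,0,1) from rfl, ← xpows]; ring)
  · exact memIg2_of_eq (0) (0) (0) (0) (0) (0) _
      (by rw [show NFm k (3,0,2) = Xp k (3,0,2) from rfl, ← xpows]; ring)
  · exact absurd h (by omega)
  · exact absurd h (by omega)
  · exact absurd h (by omega)
  · exact memIg2_of_eq (0) (0) (0) (0) (0) (0) _
      (by rw [show NFm k (3,1,0) = Xp k (3,1,0) from rfl, ← xpows]; ring)
  · exact memIg2_of_eq (0) (xx k ^ 2) (0) (0) (0) (0) _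
      (by rw [show NFm k (3,1,1) = 0 from rfl, ← xpows]; ring)
  · exact absurd h (by omega)
  · exact absurd h (by omega)
  · exact absurd h (by omega)
  · exact absurd h (by omega)
  · exact memIg2_of_eq (xx k ^ 2) (0) (0) (0) (0) (0) _
      (by rw [show NFm k (3,2,0) = 0 from rfl, ← xpows]; ring)
  · exact absurd h (by omega)
  · exact absurd h (by omega)
  · exact absurd h (by omega)
  · exact absurd h (by omega)
  · exact absurd h (by omega)
  · exact absurd h (by omega)
  · exact absurd h (by omega)
  · exact absurd h (by omega)
  · exact absurd h (by omega)
  · exact absurd h (by omega)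
  · exact absurd h (by omega)
  · exact absurd h (by omega)
  · exact absurd h (by omega)
  · exact absurd h (by omega)
  · exact absurd h (by omega)
  · exact absurd h (by omega)
  · exact absurd h (by omega)
  · exact absurd h (by omega)
  · exact absurd h (by omega)
  · exact absurd h (by omega)
  · exact absurd h (by omega)
  · exact absurd h (by omega)
  · exact absurd h (by omega)
  · exact memIg2_of_eq (0) (0) (0) (0) (0) (0) _
      (by rw [show NFm k (4,0,0) = Xp k (4,0,0) from rfl, ← xpows]; ring)
  · exact memIg2_of_eq (0) (0) (yy k ^ 2) (zz k) (0) (0) _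
      (by rw [show NFm k (4,0,1) = 0 from rfl, ← xpows]; ring)
  · exact absurd h (by omega)
  · exact absurd h (by omega)
  · exact absurd h (by omega)
  · exact absurd h (by omega)
  · exact memIg2_of_eq (0) (0) (0) (0) (0) (0) _
      (by rw [show NFm k (4,1,0) = Xp k (4,1,0) from rfl, ← xpows]; ring)
  · exact absurd h (by omega)
  · exact absurd h (by omega)
  · exact absurd h (by omega)
  · exact absurd h (by omega)
  · exact absurd h (by omega)
  · exact absurd h (by omega)
  · exact absurd h (by omega)
  · exact absurd h (by omega)
  · exact absurd h (by omega)
  · exact absurd h (by omega)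
  · exact absurd h (by omega)
  · exact absurd h (by omega)
  · exact absurd h (by omega)
  · exact absurd h (by omega)
  · exact absurd h (by omega)
  · exact absurd h (by omega)
  · exact absurd h (by omega)
  · exact absurd h (by omega)
  · exact absurd h (by omega)
  · exact absurd h (by omega)
  · exact absurd h (by omega)
  · exact absurd h (by omega)
  · exact absurd h (by omega)
  · exact absurd h (by omega)
  · exact absurd h (by omega)
  · exact absurd h (by omega)
  · exact absurd h (by omega)
  · exact absurd h (by omega)
  · exact absurd h (by omega)
  · exact memIg2_of_eq (yy k * zz k) (0) (0) (xx k) (0) (0) _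
      (by rw [show NFm k (5,0,0) = 0 from rfl, ← xpows]; ring)
  · exact absurd h (by omega)
  · exact absurd h (by omega)
  · exact absurd h (by omega)
  · exact absurd h (by omega)
  · exact absurd h (by omega)
  · exact absurd h (by omega)
  · exact absurd h (by omega)
  · exact absurd h (by omega)
  · exact absurd h (by omega)
  · exact absurd h (by omega)
  · exact absurd h (by omega)
  · exact absurd h (by omega)
  · exact absurd h (by omega)
  · exact absurd h (by omega)
  · exact absurd h (by omega)
  · exact absurd h (by omega)
  · exact absurd h (by omega)
  · exact absurd h (by omega)
  · exact absurd h (by omega)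
  · exact absurd h (by omega)
  · exact absurd h (by omega)
  · exact absurd h (by omega)
  · exact absurd h (by omega)
  · exact absurd h (by omega)
  · exact absurd h (by omega)
  · exact absurd h (by omega)
  · exact absurd h (by omega)
  · exact absurd h (by omega)
  · exact absurd h (by omega)
  · exact absurd h (by omega)
  · exact absurd h (by omega)
  · exact absurd h (by omega)
  · exact absurd h (by omega)
  · exact absurd h (by omega)
  · exact absurd h (by omega)

lemma x6_mem (k : Type*) [Field k] :
    ∀ t : ℕ × ℕ × ℕ, deg3 t = 6 → Xp k t ∈ Ig2 k := by
  rintro ⟨a, b, c⟩ h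
  simp only [deg3] at h
  have ha : a ≤ 6 := by omega
  have hb : b ≤ 6 := by omega
  have hc : c ≤ 6 := by omega
  interval_cases a <;> interval_cases b <;> interval_cases c
  · exact absurd h (by omega)
  · exact absurd h (by omega)
  · exact absurd h (by omega)
  · exact absurd h (by omega)
  · exact absurd h (by omega)
  · exact absurd h (by omega)
  · exact memIg2_of_eq (0) (xx k ^ 2 * zz k) (0) (0) (0) (-(zz k ^ 2)) _ (by rw [← xpows]; ring)
  · exact absurd h (by omega)
  · exact absurd h (by omega)
  · exact absurd h (by omega)
  · exact absurd h (by omega)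
  · exact absurd h (by omega)
  · exact memIg2_of_eq (xx k ^ 2 * zz k) (0) (0) (0) (0) (-(yy k * zz k)) _ (by rw [← xpows]; ring)
  · exact absurd h (by omega)
  · exact absurd h (by omega)
  · exact absurd h (by omega)
  · exact absurd h (by omega)
  · exact absurd h (by omega)
  · exact memIg2_of_eq (0) (0) (yy k * zz k ^ 2) (0) (0) (0) _ (by rw [← xpows]; ring)
  · exact absurd h (by omega)
  · exact absurd h (by omega)
  · exact absurd h (by omega)
  · exact absurd h (by omega)
  · exact absurd h (by omega)
  · exact memIg2_of_eq (0) (0) (yy k ^ 2 * zz k) (0) (0) (0) _ (by rw [← xpows]; ring)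
  · exact absurd h (by omega)
  · exact absurd h (by omega)
  · exact absurd h (by omega)
  · exact absurd h (by omega)
  · exact absurd h (by omega)
  · exact memIg2_of_eq (0) (0) (yy k ^ 3) (0) (0) (0) _ (by rw [← xpows]; ring)
  · exact absurd h (by omega)
  · exact absurd h (by omega)
  · exact absurd h (by omega)
  · exact absurd h (by omega)
  · exact absurd h (by omega)
  · exact memIg2_of_eq (0) (zz k ^ 3) (0) (0) (-(yy k * zz k)) (0) _ (by rw [← xpows]; ring)
  · exact absurd h (by omega)
  · exact absurd h (by omega)
  · exact absurd h (by omega)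
  · exact absurd h (by omega)
  · exact absurd h (by omega)
  · exact memIg2_of_eq (zz k ^ 3) (0) (0) (0) (-(yy k ^ 2)) (0) _ (by rw [← xpows]; ring)
  · exact absurd h (by omega)
  · exact absurd h (by omega)
  · exact absurd h (by omega)
  · exact absurd h (by omega)
  · exact absurd h (by omega)
  · exact absurd h (by omega)
  · exact absurd h (by omega)
  · exact absurd h (by omega)
  · exact absurd h (by omega)
  · exact absurd h (by omega)
  · exact absurd h (by omega)
  · exact memIg2_of_eq (0) (0) (yy k ^ 3) (0) (zz k ^ 2) (0) _ (by rw [← xpows]; ring)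
  · exact absurd h (by omega)
  · exact absurd h (by omega)
  · exact absurd h (by omega)
  · exact absurd h (by omega)
  · exact absurd h (by omega)
  · exact memIg2_of_eq (0) (zz k ^ 3) (0) (0) (0) (0) _ (by rw [← xpows]; ring)
  · exact absurd h (by omega)
  · exact absurd h (by omega)
  · exact absurd h (by omega)
  · exact absurd h (by omega)
  · exact absurd h (by omega)
  · exact memIg2_of_eq (zz k ^ 3) (0) (0) (0) (0) (0) _ (by rw [← xpows]; ring)
  · exact absurd h (by omega)
  · exact absurd h (by omega)
  · exact absurd h (by omega)
  · exact absurd h (by omega)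
  · exact absurd h (by omega)
  · exact memIg2_of_eq (yy k * zz k ^ 2) (0) (0) (0) (0) (0) _ (by rw [← xpows]; ring)
  · exact absurd h (by omega)
  · exact absurd h (by omega)
  · exact absurd h (by omega)
  · exact absurd h (by omega)
  · exact absurd h (by omega)
  · exact memIg2_of_eq (yy k ^ 2 * zz k) (0) (0) (0) (0) (0) _ (by rw [← xpows]; ring)
  · exact absurd h (by omega)
  · exact absurd h (by omega)
  · exact absurd h (by omega)
  · exact absurd h (by omega)
  · exact absurd h (by omega)
  · exact memIg2_of_eq (yy k ^ 3) (0) (0) (0) (0) (0) _ (by rw [← xpows]; ring)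
  · exact absurd h (by omega)
  · exact absurd h (by omega)
  · exact absurd h (by omega)
  · exact absurd h (by omega)
  · exact absurd h (by omega)
  · exact absurd h (by omega)
  · exact absurd h (by omega)
  · exact absurd h (by omega)
  · exact absurd h (by omega)
  · exact absurd h (by omega)
  · exact absurd h (by omega)
  · exact absurd h (by omega)
  · exact absurd h (by omega)
  · exact absurd h (by omega)
  · exact absurd h (by omega)
  · exact absurd h (by omega)
  · exact absurd h (by omega)
  · exact memIg2_of_eq (yy k ^ 2 * zz k) (0) (0) (0) (xx k * zz k) (0) _ (by rw [← xpows]; ring)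
  · exact absurd h (by omega)
  · exact absurd h (by omega)
  · exact absurd h (by omega)
  · exact absurd h (by omega)
  · exact absurd h (by omega)
  · exact memIg2_of_eq (0) (xx k * zz k ^ 2) (0) (0) (0) (0) _ (by rw [← xpows]; ring)
  · exact absurd h (by omega)
  · exact absurd h (by omega)
  · exact absurd h (by omega)
  · exact absurd h (by omega)
  · exact absurd h (by omega)
  · exact memIg2_of_eq (xx k * zz k ^ 2) (0) (0) (0) (0) (0) _ (by rw [← xpows]; ring)
  · exact absurd h (by omega)
  · exact absurd h (by omega)
  · exact absurd h (by omega)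
  · exact absurd h (by omega)
  · exact absurd h (by omega)
  · exact memIg2_of_eq (xx k * yy k * zz k) (0) (0) (0) (0) (0) _ (by rw [← xpows]; ring)
  · exact absurd h (by omega)
  · exact absurd h (by omega)
  · exact absurd h (by omega)
  · exact absurd h (by omega)
  · exact absurd h (by omega)
  · exact memIg2_of_eq (xx k * yy k ^ 2) (0) (0) (0) (0) (0) _ (by rw [← xpows]; ring)
  · exact absurd h (by omega)
  · exact absurd h (by omega)
  · exact absurd h (by omega)
  · exact absurd h (by omega)
  · exact absurd h (by omega)
  · exact absurd h (by omega)
  · exact absurd h (by omega)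
  · exact absurd h (by omega)
  · exact absurd h (by omega)
  · exact absurd h (by omega)
  · exact absurd h (by omega)
  · exact absurd h (by omega)
  · exact absurd h (by omega)
  · exact absurd h (by omega)
  · exact absurd h (by omega)
  · exact absurd h (by omega)
  · exact absurd h (by omega)
  · exact absurd h (by omega)
  · exact absurd h (by omega)
  · exact absurd h (by omega)
  · exact absurd h (by omega)
  · exact absurd h (by omega)
  · exact absurd h (by omega)
  · exact memIg2_of_eq (xx k * yy k ^ 2) (0) (0) (0) (xx k ^ 2) (0) _ (by rw [← xpows]; ring)
  · exact absurd h (by omega)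
  · exact absurd h (by omega)
  · exact absurd h (by omega)
  · exact absurd h (by omega)
  · exact absurd h (by omega)
  · exact memIg2_of_eq (0) (xx k ^ 2 * zz k) (0) (0) (0) (0) _ (by rw [← xpows]; ring)
  · exact absurd h (by omega)
  · exact absurd h (by omega)
  · exact absurd h (by omega)
  · exact absurd h (by omega)
  · exact absurd h (by omega)
  · exact memIg2_of_eq (xx k ^ 2 * zz k) (0) (0) (0) (0) (0) _ (by rw [← xpows]; ring)
  · exact absurd h (by omega)
  · exact absurd h (by omega)
  · exact absurd h (by omega)
  · exact absurd h (by omega)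
  · exact absurd h (by omega)
  · exact memIg2_of_eq (xx k ^ 2 * yy k) (0) (0) (0) (0) (0) _ (by rw [← xpows]; ring)
  · exact absurd h (by omega)
  · exact absurd h (by omega)
  · exact absurd h (by omega)
  · exact absurd h (by omega)
  · exact absurd h (by omega)
  · exact absurd h (by omega)
  · exact absurd h (by omega)
  · exact absurd h (by omega)
  · exact absurd h (by omega)
  · exact absurd h (by omega)
  · exact absurd h (by omega)
  · exact absurd h (by omega)
  · exact absurd h (by omega)
  · exact absurd h (by omega)
  · exact absurd h (by omega)
  · exact absurd h (by omega)
  · exact absurd h (by omega)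
  · exact absurd h (by omega)
  · exact absurd h (by omega)
  · exact absurd h (by omega)
  · exact absurd h (by omega)
  · exact absurd h (by omega)
  · exact absurd h (by omega)
  · exact absurd h (by omega)
  · exact absurd h (by omega)
  · exact absurd h (by omega)
  · exact absurd h (by omega)
  · exact absurd h (by omega)
  · exact absurd h (by omega)
  · exact memIg2_of_eq (0) (0) (yy k ^ 2 * zz k) (zz k ^ 2) (0) (0) _ (by rw [← xpows]; ring)
  · exact absurd h (by omega)
  · exact absurd h (by omega)
  · exact absurd h (by omega)
  · exact absurd h (by omega)
  · exact absurd h (by omega)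
  · exact memIg2_of_eq (0) (xx k ^ 3) (0) (0) (0) (0) _ (by rw [← xpows]; ring)
  · exact absurd h (by omega)
  · exact absurd h (by omega)
  · exact absurd h (by omega)
  · exact absurd h (by omega)
  · exact absurd h (by omega)
  · exact memIg2_of_eq (xx k ^ 3) (0) (0) (0) (0) (0) _ (by rw [← xpows]; ring)
  · exact absurd h (by omega)
  · exact absurd h (by omega)
  · exact absurd h (by omega)
  · exact absurd h (by omega)
  · exact absurd h (by omega)
  · exact absurd h (by omega)
  · exact absurd h (by omega)
  · exact absurd h (by omega)
  · exact absurd h (by omega)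
  · exact absurd h (by omega)
  · exact absurd h (by omega)
  · exact absurd h (by omega)
  · exact absurd h (by omega)
  · exact absurd h (by omega)
  · exact absurd h (by omega)
  · exact absurd h (by omega)
  · exact absurd h (by omega)
  · exact absurd h (by omega)
  · exact absurd h (by omega)
  · exact absurd h (by omega)
  · exact absurd h (by omega)
  · exact absurd h (by omega)
  · exact absurd h (by omega)
  · exact absurd h (by omega)
  · exact absurd h (by omega)
  · exact absurd h (by omega)
  · exact absurd h (by omega)
  · exact absurd h (by omega)
  · exact absurd h (by omega)
  · exact absurd h (by omega)
  · exact absurd h (by omega)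
  · exact absurd h (by omega)
  · exact absurd h (by omega)
  · exact absurd h (by omega)
  · exact absurd h (by omega)
  · exact memIg2_of_eq (0) (0) (xx k * yy k ^ 2) (xx k * zz k) (0) (0) _ (by rw [← xpows]; ring)
  · exact absurd h (by omega)
  · exact absurd h (by omega)
  · exact absurd h (by omega)
  · exact absurd h (by omega)
  · exact absurd h (by omega)
  · exact memIg2_of_eq (yy k ^ 2 * zz k) (0) (0) (xx k * yy k) (0) (0) _ (by rw [← xpows]; ring)
  · exact absurd h (by omega)
  · exact absurd h (by omega)
  · exact absurd h (by omega)
  · exact absurd h (by omega)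
  · exact absurd h (by omega)
  · exact absurd h (by omega)
  · exact absurd h (by omega)
  · exact absurd h (by omega)
  · exact absurd h (by omega)
  · exact absurd h (by omega)
  · exact absurd h (by omega)
  · exact absurd h (by omega)
  · exact absurd h (by omega)
  · exact absurd h (by omega)
  · exact absurd h (by omega)
  · exact absurd h (by omega)
  · exact absurd h (by omega)
  · exact absurd h (by omega)
  · exact absurd h (by omega)
  · exact absurd h (by omega)
  · exact absurd h (by omega)
  · exact absurd h (by omega)
  · exact absurd h (by omega)
  · exact absurd h (by omega)
  · exact absurd h (by omega)
  · exact absurd h (by omega)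
  · exact absurd h (by omega)
  · exact absurd h (by omega)
  · exact absurd h (by omega)
  · exact absurd h (by omega)
  · exact absurd h (by omega)
  · exact absurd h (by omega)
  · exact absurd h (by omega)
  · exact absurd h (by omega)
  · exact absurd h (by omega)
  · exact absurd h (by omega)
  · exact absurd h (by omega)
  · exact absurd h (by omega)
  · exact absurd h (by omega)
  · exact absurd h (by omega)
  · exact absurd h (by omega)
  · exact memIg2_of_eq (0) (xx k * yy k ^ 2) (0) (xx k ^ 2) (0) (0) _ (by rw [← xpows]; ring)
  · exact absurd h (by omega)
  · exact absurd h (by omega)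
  · exact absurd h (by omega)
  · exact absurd h (by omega)
  · exact absurd h (by omega)
  · exact absurd h (by omega)
  · exact absurd h (by omega)
  · exact absurd h (by omega)
  · exact absurd h (by omega)
  · exact absurd h (by omega)
  · exact absurd h (by omega)
  · exact absurd h (by omega)
  · exact absurd h (by omega)
  · exact absurd h (by omega)
  · exact absurd h (by omega)
  · exact absurd h (by omega)
  · exact absurd h (by omega)
  · exact absurd h (by omega)
  · exact absurd h (by omega)
  · exact absurd h (by omega)
  · exact absurd h (by omega)
  · exact absurd h (by omega)
  · exact absurd h (by omega)
  · exact absurd h (by omega)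
  · exact absurd h (by omega)
  · exact absurd h (by omega)
  · exact absurd h (by omega)
  · exact absurd h (by omega)
  · exact absurd h (by omega)
  · exact absurd h (by omega)
  · exact absurd h (by omega)
  · exact absurd h (by omega)
  · exact absurd h (by omega)
  · exact absurd h (by omega)
  · exact absurd h (by omega)
  · exact absurd h (by omega)
  · exact absurd h (by omega)
  · exact absurd h (by omega)
  · exact absurd h (by omega)
  · exact absurd h (by omega)
  · exact absurd h (by omega)
  · exact absurd h (by omega)
  · exact absurd h (by omega)
  · exact absurd h (by omega)
  · exact absurd h (by omega)
  · exact absurd h (by omega)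
  · exact absurd h (by omega)
  · exact absurd h (by omega)

/-- greedy choice of a degree-6 "divisor" of a monomial of degree at least 6 -/
def pick (t : ℕ × ℕ × ℕ) : ℕ × ℕ × ℕ :=
  if 6 ≤ t.1 then (6,0,0)
  else if 6 ≤ t.1 + t.2.1 then (t.1, 6 - t.1, 0)
  else (t.1, t.2.1, 6 - t.1 - t.2.1)

lemma pick_tle {t : ℕ × ℕ × ℕ} (h : 6 ≤ deg3 t) : tle (pick t) t := by
  obtain ⟨a, b, c⟩ := t
  simp only [deg3] at h
  simp only [pick, tle]
  split_ifs with h1 h2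
  · exact ⟨h1, Nat.zero_le b, Nat.zero_le c⟩
  · exact ⟨Nat.le_refl a, show 6 - a ≤ b by omega, Nat.zero_le c⟩
  · exact ⟨Nat.le_refl a, Nat.le_refl b, show 6 - a - b ≤ c by omega⟩

lemma pick_deg {t : ℕ × ℕ × ℕ} : deg3 (pick t) = 6 := by
  obtain ⟨a, b, c⟩ := t
  simp only [pick]
  split_ifs with h1 h2
  · rfl
  · show a + (6 - a) + 0 = 6
    omega
  · show a + b + (6 - a - b) = 6
    omega

def D6 : Finset (ℕ × ℕ × ℕ) :=
  (Finset.range 7 ×ˢ Finset.range 7 ×ˢ Finset.range 7).filter (fun t => deg3 t = 6)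

lemma mem_D6 {t : ℕ × ℕ × ℕ} : t ∈ D6 ↔ deg3 t = 6 := by
  obtain ⟨a, b, c⟩ := t
  rw [D6, Finset.mem_filter]
  simp only [D6, Finset.mem_filter, Finset.mem_product, Finset.mem_range, deg3]
  omega

/-- the cofactor series in the decomposition of a series with low coefficients zero -/
def gser (σ : ℕ × ℕ × ℕ) (f : MvPowerSeries (Fin 3) k) : MvPowerSeries (Fin 3) k :=
  fun μ => if pick (tadd (tr3 μ) σ) = σ then MvPowerSeries.coeff (μ + ee σ) f else 0

lemma coeff_gser (σ : ℕ × ℕ × ℕ) (f : MvPowerSeries (Fin 3) k) (μ : Fin 3 →₀ ℕ) :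
    MvPowerSeries.coeff μ (gser σ f)
      = if pick (tadd (tr3 μ) σ) = σ then MvPowerSeries.coeff (μ + ee σ) f else 0 := rfl

lemma tr3_sub (ν : Fin 3 →₀ ℕ) (σ : ℕ × ℕ × ℕ) : tr3 (ν - ee σ) = tsub (tr3 ν) σ := by
  simp only [tr3, tsub, Finsupp.tsub_apply, ee_apply0, ee_apply1, ee_apply2]

lemma deg3_tr3 (ν : Fin 3 →₀ ℕ) : deg3 (tr3 ν) = ν 0 + ν 1 + ν 2 := rfl

/-- Everything with vanishing coefficients in degrees ≤ 5 is in the ideal. -/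
lemma high_mem (f : MvPowerSeries (Fin 3) k)
    (h : ∀ ν : Fin 3 →₀ ℕ, ν 0 + ν 1 + ν 2 ≤ 5 → MvPowerSeries.coeff ν f = 0) :
    f ∈ Ig2 k := by
  have hfe : f = ∑ σ ∈ D6, Xp k σ * gser σ f := by
    ext ν
    rw [map_sum]
    have hterm : ∀ σ ∈ D6, MvPowerSeries.coeff ν (Xp k σ * gser σ f)
        = if tle σ (tr3 ν) ∧ pick (tr3 ν) = σ then MvPowerSeries.coeff ν f else 0 := by
      intro σ _
      rw [Xp, coeff_monomial_mul]
      by_cases hle : tle σ (tr3 ν)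
      · have hle' : ee σ ≤ ν := by
          rw [← ee_tr3 ν]; exact ee_le_iff.mpr hle
        rw [if_pos hle', one_mul, coeff_gser]
        rw [tr3_sub, tsub_tadd_cancel hle, tsub_add_cancel_of_le hle']
        by_cases hp : pick (tr3 ν) = σ
        · rw [if_pos hp, if_pos ⟨hle, hp⟩]
        · rw [if_neg hp, if_neg (fun hc => hp hc.2)]
      · rw [if_neg (fun hc => hle (by rw [← ee_tr3 ν] at hc; exact ee_le_iff.mp hc)),
          if_neg (fun hc => hle hc.1)]
    rw [Finset.sum_congr rfl hterm]
    by_cases hν : deg3 (tr3 ν) ≤ 5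
    · rw [Finset.sum_eq_zero, h ν (by rwa [deg3_tr3] at hν)]
      intro σ hσ
      rw [if_neg]
      rintro ⟨hle, -⟩
      have hd : deg3 σ = 6 := mem_D6.mp hσ
      obtain ⟨a, b, c⟩ := σ
      simp only [tle] at hle
      simp only [deg3] at hd hν
      omega
    · push_neg at hν
      rw [Finset.sum_eq_single (pick (tr3 ν))]
      · rw [if_pos ⟨pick_tle (by omega), rfl⟩]
      · intro σ _ hne
        exact if_neg (fun hc => hne hc.2.symm)
      · intro hmem
        exact absurd (mem_D6.mpr pick_deg) hmem
  rw [hfe]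
  refine Ideal.sum_mem _ fun σ hσ => ?_
  exact Ideal.mul_mem_right _ _ (x6_mem k σ (mem_D6.mp hσ))

def T5 : Finset (ℕ × ℕ × ℕ) := TT.filter (fun t => deg3 t ≤ 5)

lemma mem_T5 {t : ℕ × ℕ × ℕ} : t ∈ T5 ↔ deg3 t ≤ 5 := by
  obtain ⟨a, b, c⟩ := t
  rw [T5, Finset.mem_filter]
  simp only [T5, Finset.mem_filter, mem_TT, deg3]
  omega

lemma nfm_span (k : Type*) [Field k] (t : ℕ × ℕ × ℕ) :
    Ideal.Quotient.mk (Ig2 k) (NFm k t) ∈ Submodule.span k (Set.range (mons_g2 k)) := by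
  cases hn : nfIdx t with
  | none =>
      have h0 : NFm k t = 0 := by unfold NFm; rw [hn]
      rw [h0]; simp
  | some j =>
      have h0 : NFm k t = Xp k (std j) := by unfold NFm; rw [hn]
      rw [h0, ← mons_eq k j]
      exact Submodule.subset_span ⟨j, rfl⟩

lemma mons_span (k : Type*) [Field k] :
    Submodule.span k (Set.range (mons_g2 k)) = ⊤ := by
  rw [eq_top_iff]
  rintro x -
  obtain ⟨f, rfl⟩ := Ideal.Quotient.mk_surjective x
  set P : MvPowerSeries (Fin 3) k :=
    ∑ t ∈ T5, MvPowerSeries.coeff (ee t) f • Xp k t with hPdef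
  have hcoeffP : ∀ ν : Fin 3 →₀ ℕ, ν 0 + ν 1 + ν 2 ≤ 5 →
      MvPowerSeries.coeff ν P = MvPowerSeries.coeff ν f := by
    intro ν hν
    rw [hPdef, map_sum]
    have hterm : ∀ t ∈ T5, MvPowerSeries.coeff ν (MvPowerSeries.coeff (ee t) f • Xp k t)
        = if t = tr3 ν then MvPowerSeries.coeff (ee t) f else 0 := by
      intro t _
      rw [map_smul, Xp, coeff_monomial, smul_eq_mul]
      by_cases h : t = tr3 ν
      · rw [if_pos (by rw [h, ee_tr3]), if_pos h, mul_one]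
      · rw [if_neg ?_, if_neg h, mul_zero]
        intro hc
        exact h (ee_eq_iff.mp (by rw [← ee_tr3 ν] at hc; exact hc)).symm
    rw [Finset.sum_congr rfl hterm,
      Finset.sum_ite_eq' T5 (tr3 ν) (fun t => MvPowerSeries.coeff (ee t) f),
      if_pos (mem_T5.mpr (by rwa [deg3_tr3])), ee_tr3]
  have hPf : f - P ∈ Ig2 k := by
    refine high_mem _ fun ν hν => ?_
    rw [map_sub, hcoeffP ν hν, sub_self]
  have hmkP : Ideal.Quotient.mk (Ig2 k) f = Ideal.Quotient.mk (Ig2 k) P := by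
    rw [Ideal.Quotient.mk_eq_mk_iff_sub_mem]
    exact hPf
  rw [hmkP, hPdef, ← Ideal.Quotient.mkₐ_eq_mk k, map_sum]
  refine Submodule.sum_mem _ fun t ht => ?_
  rw [map_smul]
  refine Submodule.smul_mem _ _ ?_
  have hred : Xp k t - NFm k t ∈ Ig2 k := by
    obtain ⟨a, b, c⟩ := t
    exact red_low k a b c (by simpa [deg3] using mem_T5.mp ht)
  have : Ideal.Quotient.mkₐ k (Ig2 k) (Xp k t) = Ideal.Quotient.mk (Ig2 k) (NFm k t) := by
    rw [Ideal.Quotient.mkₐ_eq_mk k, Ideal.Quotient.mk_eq_mk_iff_sub_mem]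
    exact hred
  rw [this]
  exact nfm_span k t

end BG2

theorem basis_g2 (k : Type*) [Field k] :
    Module.finrank k (MvPowerSeries (Fin 3) k ⧸ Ig2 k) = 24 ∧
    LinearIndependent k (mons_g2 k) ∧
    Submodule.span k (Set.range (mons_g2 k)) = ⊤ := by
  have hli := BG2.mons_li k
  have hsp := BG2.mons_span k
  refine ⟨?_, hli, hsp⟩
  have b : Module.Basis (Fin 24) k (MvPowerSeries (Fin 3) k ⧸ Ig2 k) :=
    Module.Basis.mk hli (le_of_eq hsp.symm)
  rw [Module.finrank_eq_card_basis b, Fintype.card_fin]
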